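/- Suppose X ∈ ℝ^p is a mean-zero random vector with positive definite covariance Σ_X and finite fourth moments satisfying E(X_i X_j X_k) = 0 for all i,j,k (condition C1), and Y follows model (2) with ε mean-zero and independent of X. Then, with Z = Σ_X⁻¹X, every entry of the principal Hessian matrix Ψ = Σ_X⁻¹ Σ_{YXX} Σ_X⁻¹ satisfies ψ_{ij} = Σ_{k ≤ ℓ} β_{kℓ} · Cov(X_k X_ℓ, Z_i Z_j). (Key intermediate identity in the proof of Proposition 2) -/

import Mathlib

open MeasureTheory ProbabilityTheory Matrix

/-- Key intermediate identity in the proof of Proposition 2: if `X` is mean-zero with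
positive definite covariance `Σ_X`, finite fourth moments, and vanishing third moments
(condition C1), and `Y` follows model (2) with `ε` mean-zero and independent of `X`, then
with `Z = Σ_X⁻¹X`, every entry of the principal Hessian matrix
`Ψ = Σ_X⁻¹ Σ_{YXX} Σ_X⁻¹` satisfies
`ψ_{ij} = Σ_{k ≤ ℓ} β_{kℓ} · Cov(X_k X_ℓ, Z_i Z_j)`. -/
theorem prop2_key_identity {Ω : Type*} [MeasurableSpace Ω] (μ : Measure Ω)
    [IsProbabilityMeasure μ] {p : ℕ}
    (X : Ω → Fin p → ℝ) (hXm : Measurable X)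
    (Sig : Matrix (Fin p) (Fin p) ℝ) (hSig : Sig.PosDef)
    (hmean : ∀ i, ∫ ω, X ω i ∂μ = 0)
    (hcov : ∀ i j, ∫ ω, X ω i * X ω j ∂μ = Sig i j)
    (hmom4 : ∀ i j k l : Fin p, Integrable (fun ω => X ω i * X ω j * X ω k * X ω l) μ)
    (hmom2 : ∀ i j : Fin p, Integrable (fun ω => X ω i * X ω j) μ)
    (hXint : ∀ i, Integrable (fun ω => X ω i) μ)
    -- condition C1: third moments vanish
    (hC1 : ∀ i j k : Fin p, ∫ ω, X ω i * X ω j * X ω k ∂μ = 0)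
    (hmom3 : ∀ i j k : Fin p, Integrable (fun ω => X ω i * X ω j * X ω k) μ)
    (Z : Ω → Fin p → ℝ) (hZ : ∀ ω, Z ω = Sig⁻¹.mulVec (X ω))
    -- model (2)
    (θ : Fin p → ℝ) (β : Fin p → Fin p → ℝ)
    (ε : Ω → ℝ) (hεm : Measurable ε) (hindep : IndepFun ε X μ)
    (hεint : Integrable ε μ) (hεmean : ∫ ω, ε ω ∂μ = 0)
    (Y : Ω → ℝ)
    (hY : ∀ ω, Y ω = ∑ i, θ i * X ω i
        + ∑ i, ∑ j ∈ Finset.Ici i, β i j * X ω i * X ω j + ε ω)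
    (hYint : Integrable Y μ)
    (hYXX : ∀ k l : Fin p, Integrable (fun ω => Y ω * X ω k * X ω l) μ)
    (Syxx Ψ : Matrix (Fin p) (Fin p) ℝ)
    (hSyxx : ∀ k l, Syxx k l = ∫ ω, (Y ω - ∫ ω', Y ω' ∂μ) * (X ω k * X ω l) ∂μ)
    (hΨ : Ψ = Sig⁻¹ * Syxx * Sig⁻¹) :
    ∀ i j : Fin p,
      Ψ i j = ∑ k, ∑ l ∈ Finset.Ici k, β k l *
        ((∫ ω, (X ω k * X ω l) * (Z ω i * Z ω j) ∂μ)
          - (∫ ω, X ω k * X ω l ∂μ) * (∫ ω, Z ω i * Z ω j ∂μ)) := by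
  -- abbreviations
  have hXa : ∀ a : Fin p, Measurable fun ω => X ω a := fun a =>
    (measurable_pi_apply a).comp hXm
  -- symmetry of Sig⁻¹
  have hcsymm : ∀ a b, Sig⁻¹ a b = Sig⁻¹ b a := by
    intro a b
    have hs : Sigᵀ = Sig := hSig.isHermitian
    have h2 : Sig⁻¹ᵀ = Sig⁻¹ := by rw [Matrix.transpose_nonsing_inv, hs]
    calc Sig⁻¹ a b = Sig⁻¹ᵀ b a := rfl
      _ = Sig⁻¹ b a := by rw [h2]
  -- sum-integral swap for double sums over Ici
  have intsum : ∀ (F : Fin p → Fin p → Ω → ℝ), (∀ k l, Integrable (F k l) μ) →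
      ∫ ω, ∑ k, ∑ l ∈ Finset.Ici k, F k l ω ∂μ
        = ∑ k, ∑ l ∈ Finset.Ici k, ∫ ω, F k l ω ∂μ := by
    intro F hF
    rw [integral_finset_sum _ fun k _ => integrable_finset_sum _ fun l _ => hF k l]
    exact Finset.sum_congr rfl fun k _ => integral_finset_sum _ fun l _ => hF k l
  -- integrability of ε * X_a X_b
  have hεXXint : ∀ a b, Integrable (fun ω => ε ω * (X ω a * X ω b)) μ := by
    intro a b
    have h1 : (fun ω => ε ω * (X ω a * X ω b)) =
        fun ω => Y ω * X ω a * X ω b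
          - ((∑ i, θ i * (X ω i * X ω a * X ω b))
            + ∑ k, ∑ l ∈ Finset.Ici k, β k l * (X ω k * X ω l * X ω a * X ω b)) := by
      funext ω
      have hε' : ε ω = Y ω - ((∑ i, θ i * X ω i)
          + ∑ k, ∑ l ∈ Finset.Ici k, β k l * X ω k * X ω l) := by rw [hY ω]; ring
      rw [hε', sub_mul, add_mul]
      simp only [Finset.sum_mul, mul_assoc]
    rw [h1]
    exact (hYXX a b).sub
      ((integrable_finset_sum _ fun i _ => (hmom3 i a b).const_mul _).add
        (integrable_finset_sum _ fun k _ =>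
          integrable_finset_sum _ fun l _ => (hmom4 k l a b).const_mul _))
  -- E[ε X_a X_b] = 0
  have hεXX : ∀ a b, ∫ ω, ε ω * (X ω a * X ω b) ∂μ = 0 := by
    intro a b
    have hind2 : IndepFun ε (fun ω => X ω a * X ω b) μ :=
      hindep.comp measurable_id ((measurable_pi_apply a).mul (measurable_pi_apply b))
    rw [hind2.integral_fun_mul_eq_mul_integral hεm.aestronglyMeasurable
      ((hXa a).mul (hXa b)).aestronglyMeasurable, hεmean, zero_mul]
  -- generic expansion of ∫ Y g
  have expand : ∀ (g : Ω → ℝ), (∀ i, Integrable (fun ω => X ω i * g ω) μ) →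
      (∀ k l, Integrable (fun ω => X ω k * X ω l * g ω) μ) →
      Integrable (fun ω => ε ω * g ω) μ →
      ∫ ω, Y ω * g ω ∂μ = (∑ i, θ i * ∫ ω, X ω i * g ω ∂μ)
        + (∑ k, ∑ l ∈ Finset.Ici k, β k l * ∫ ω, X ω k * X ω l * g ω ∂μ)
        + ∫ ω, ε ω * g ω ∂μ := by
    intro g hg1 hg2 hg3
    have h1 : (fun ω => Y ω * g ω) = fun ω =>
        (∑ i, θ i * (X ω i * g ω))
          + ((∑ k, ∑ l ∈ Finset.Ici k, β k l * (X ω k * X ω l * g ω)) + ε ω * g ω) := by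
      funext ω; rw [hY ω]
      simp only [add_mul, Finset.sum_mul, mul_assoc, add_assoc]
    have hA : Integrable (fun ω => ∑ i, θ i * (X ω i * g ω)) μ :=
      integrable_finset_sum _ fun i _ => (hg1 i).const_mul _
    have hB : Integrable (fun ω => ∑ k, ∑ l ∈ Finset.Ici k, β k l * (X ω k * X ω l * g ω)) μ :=
      integrable_finset_sum _ fun k _ =>
        integrable_finset_sum _ fun l _ => (hg2 k l).const_mul _
    have hBC : Integrable (fun ω => (∑ k, ∑ l ∈ Finset.Ici k, β k l * (X ω k * X ω l * g ω))
        + ε ω * g ω) μ := hB.add hg3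
    rw [h1, integral_add hA hBC, integral_add hB hg3,
      integral_finset_sum _ fun i _ => (hg1 i).const_mul _,
      intsum _ fun k l => (hg2 k l).const_mul _, ← add_assoc]
    simp only [integral_const_mul]
  -- E Y
  have hEY : ∫ ω, Y ω ∂μ = ∑ k, ∑ l ∈ Finset.Ici k, β k l * Sig k l := by
    have h0 : ∫ ω, Y ω ∂μ = ∫ ω, Y ω * (fun _ : Ω => (1:ℝ)) ω ∂μ := by simp
    rw [h0, expand (fun _ => 1) (fun i => by simpa using hXint i)
      (fun k l => by simpa using hmom2 k l) (by simpa using hεint)]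
    simp only [mul_one]
    rw [hεmean]
    simp [hmean, hcov]
  -- Syxx entries
  have hSyxx' : ∀ a b, Syxx a b = ∑ k, ∑ l ∈ Finset.Ici k, β k l *
      ((∫ ω, X ω k * X ω l * X ω a * X ω b ∂μ) - Sig k l * Sig a b) := by
    intro a b
    have e1 : ∫ ω, Y ω * (X ω a * X ω b) ∂μ
        = ∑ k, ∑ l ∈ Finset.Ici k, β k l * ∫ ω, X ω k * X ω l * X ω a * X ω b ∂μ := by
      rw [expand (fun ω => X ω a * X ω b)
        (fun i => by simpa [mul_assoc] using hmom3 i a b)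
        (fun k l => by simpa [mul_assoc] using hmom4 k l a b) (hεXXint a b)]
      have hθ : ∀ i, ∫ ω, X ω i * (X ω a * X ω b) ∂μ = 0 := fun i => by
        rw [← hC1 i a b]
        exact integral_congr_ae (Filter.Eventually.of_forall fun ω => by ring)
      rw [hεXX a b]
      simp only [hθ, mul_zero, Finset.sum_const_zero, zero_add, add_zero]
      exact Finset.sum_congr rfl fun k _ => Finset.sum_congr rfl fun l _ => by
        congr 1
        exact integral_congr_ae (Filter.Eventually.of_forall fun ω => by ring)
    have h2 : (fun ω => (Y ω - ∫ ω', Y ω' ∂μ) * (X ω a * X ω b))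
        = fun ω => Y ω * (X ω a * X ω b) - (∫ ω', Y ω' ∂μ) * (X ω a * X ω b) := by
      funext ω; ring
    rw [hSyxx a b, h2,
      integral_sub (by simpa [mul_assoc] using hYXX a b) ((hmom2 a b).const_mul _),
      integral_const_mul, hcov, e1, hEY, Finset.sum_mul, ← Finset.sum_sub_distrib]
    refine Finset.sum_congr rfl fun k _ => ?_
    rw [Finset.sum_mul, ← Finset.sum_sub_distrib]
    exact Finset.sum_congr rfl fun l _ => by ring
  -- main computation
  intro i j
  have hZprod : ∀ ω, Z ω i * Z ω j
      = ∑ a, ∑ b, Sig⁻¹ i a * Sig⁻¹ j b * (X ω a * X ω b) := by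
    intro ω
    rw [hZ ω]
    simp only [Matrix.mulVec, dotProduct]
    rw [Finset.sum_mul_sum]
    exact Finset.sum_congr rfl fun a _ => Finset.sum_congr rfl fun b _ => by ring
  have hZ4 : ∀ k l, ∫ ω, (X ω k * X ω l) * (Z ω i * Z ω j) ∂μ
      = ∑ a, ∑ b, Sig⁻¹ i a * Sig⁻¹ j b * ∫ ω, X ω k * X ω l * X ω a * X ω b ∂μ := by
    intro k l
    have h1 : (fun ω => (X ω k * X ω l) * (Z ω i * Z ω j))
        = fun ω => ∑ a, ∑ b, Sig⁻¹ i a * Sig⁻¹ j b * (X ω k * X ω l * X ω a * X ω b) := by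
      funext ω
      rw [hZprod ω, Finset.mul_sum]
      refine Finset.sum_congr rfl fun a _ => ?_
      rw [Finset.mul_sum]
      exact Finset.sum_congr rfl fun b _ => by ring
    rw [h1, integral_finset_sum _ fun a _ =>
      integrable_finset_sum _ fun b _ => (hmom4 k l a b).const_mul _]
    refine Finset.sum_congr rfl fun a _ => ?_
    rw [integral_finset_sum _ fun b _ => (hmom4 k l a b).const_mul _]
    exact Finset.sum_congr rfl fun b _ => integral_const_mul _ _
  have hZ2 : ∫ ω, Z ω i * Z ω j ∂μ
      = ∑ a, ∑ b, Sig⁻¹ i a * Sig⁻¹ j b * Sig a b := by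
    have h1 : (fun ω => Z ω i * Z ω j)
        = fun ω => ∑ a, ∑ b, Sig⁻¹ i a * Sig⁻¹ j b * (X ω a * X ω b) :=
      funext hZprod
    rw [h1, integral_finset_sum _ fun a _ =>
      integrable_finset_sum _ fun b _ => (hmom2 a b).const_mul _]
    refine Finset.sum_congr rfl fun a _ => ?_
    rw [integral_finset_sum _ fun b _ => (hmom2 a b).const_mul _]
    refine Finset.sum_congr rfl fun b _ => ?_
    rw [integral_const_mul, hcov]
  -- sum reordering helper
  have h1g : ∀ (g : Fin p → Fin p → Fin p → ℝ),
      ∑ x, ∑ k, ∑ l ∈ Finset.Ici k, g x k l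
        = ∑ k, ∑ l ∈ Finset.Ici k, ∑ x, g x k l := by
    intro g
    rw [Finset.sum_comm]
    exact Finset.sum_congr rfl fun k _ => Finset.sum_comm
  have final : ∀ (f : Fin p → Fin p → Fin p → Fin p → ℝ),
      ∑ b, ∑ a, ∑ k, ∑ l ∈ Finset.Ici k, f a b k l
        = ∑ k, ∑ l ∈ Finset.Ici k, ∑ a, ∑ b, f a b k l := by
    intro f
    calc ∑ b, ∑ a, ∑ k, ∑ l ∈ Finset.Ici k, f a b k l
        = ∑ b, ∑ k, ∑ l ∈ Finset.Ici k, ∑ a, f a b k l :=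
          Finset.sum_congr rfl fun b _ => h1g _
      _ = ∑ k, ∑ l ∈ Finset.Ici k, ∑ b, ∑ a, f a b k l := h1g _
      _ = ∑ k, ∑ l ∈ Finset.Ici k, ∑ a, ∑ b, f a b k l :=
          Finset.sum_congr rfl fun k _ => Finset.sum_congr rfl fun l _ =>
            Finset.sum_comm
  calc Ψ i j = ∑ b, ∑ a, Sig⁻¹ i a * Syxx a b * Sig⁻¹ j b := by
        rw [hΨ]
        simp only [Matrix.mul_apply, Finset.sum_mul]
        exact Finset.sum_congr rfl fun b _ => Finset.sum_congr rfl fun a _ => by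
          rw [hcsymm b j]
    _ = ∑ b, ∑ a, ∑ k, ∑ l ∈ Finset.Ici k, Sig⁻¹ i a * Sig⁻¹ j b *
          (β k l * ((∫ ω, X ω k * X ω l * X ω a * X ω b ∂μ) - Sig k l * Sig a b)) := by
        refine Finset.sum_congr rfl fun b _ => Finset.sum_congr rfl fun a _ => ?_
        rw [hSyxx' a b]
        simp only [Finset.mul_sum, Finset.sum_mul]
        exact Finset.sum_congr rfl fun k _ => Finset.sum_congr rfl fun l _ => by ring
    _ = ∑ k, ∑ l ∈ Finset.Ici k, ∑ a, ∑ b, Sig⁻¹ i a * Sig⁻¹ j b *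
          (β k l * ((∫ ω, X ω k * X ω l * X ω a * X ω b ∂μ) - Sig k l * Sig a b)) :=
        final _
    _ = ∑ k, ∑ l ∈ Finset.Ici k, β k l *
          ((∫ ω, (X ω k * X ω l) * (Z ω i * Z ω j) ∂μ)
            - (∫ ω, X ω k * X ω l ∂μ) * (∫ ω, Z ω i * Z ω j ∂μ)) := by
        refine Finset.sum_congr rfl fun k _ => Finset.sum_congr rfl fun l _ => ?_
        rw [hZ4 k l, hZ2, hcov]
        simp only [mul_sub, Finset.mul_sum]
        rw [← Finset.sum_sub_distrib]
        refine Finset.sum_congr rfl fun a _ => ?_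
        rw [← Finset.sum_sub_distrib]
        exact Finset.sum_congr rfl fun b _ => by ring
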